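/- The representation ρ_n = ((C^{n+1}, C^n), (R, R̄)) of the Kronecker quiver, where R is the n×(n+1) matrix with R_{i,j} = δ_{i,j} and R̄ is the n×(n+1) matrix with R̄_{i,j} = δ_{i+1,j}, is indecomposable; its endomorphism ring consists only of scalar pairs (λ·id, λ·id). -/

import Mathlib

noncomputable section

/-- A representation of the Kronecker quiver: two complex vector spaces and two
linear maps `f, g : V0 → V1`. -/
structure KronRep : Type 1 where
  V0 : Type
  V1 : Type
  [acg0 : AddCommGroup V0]
  [acg1 : AddCommGroup V1]
  [mod0 : Module ℂ V0]
  [mod1 : Module ℂ V1]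
  f : V0 →ₗ[ℂ] V1
  g : V0 →ₗ[ℂ] V1

attribute [instance] KronRep.acg0 KronRep.acg1 KronRep.mod0 KronRep.mod1

/-- Isomorphism of Kronecker quiver representations. -/
def KronRep.Iso (M N : KronRep) : Prop :=
  ∃ (e0 : M.V0 ≃ₗ[ℂ] N.V0) (e1 : M.V1 ≃ₗ[ℂ] N.V1),
    (∀ x, e1 (M.f x) = N.f (e0 x)) ∧ (∀ x, e1 (M.g x) = N.g (e0 x))

/-- Direct sum of two Kronecker quiver representations. -/
def KronRep.prod (M N : KronRep) : KronRep where
  V0 := M.V0 × N.V0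
  V1 := M.V1 × N.V1
  f := M.f.prodMap N.f
  g := M.g.prodMap N.g

/-- The zero representation. -/
def KronRep.IsZero (M : KronRep) : Prop :=
  (∀ x : M.V0, x = 0) ∧ (∀ x : M.V1, x = 0)

/-- A representation is indecomposable if it is nonzero and any direct sum
decomposition has a zero summand. -/
def KronRep.Indecomposable (M : KronRep) : Prop :=
  ¬ M.IsZero ∧ ∀ N P : KronRep, M.Iso (N.prod P) → N.IsZero ∨ P.IsZero

/-- The representation `((ℂ, ℂ), (r, r̄))` given by a pair of scalars. -/
def scalarRep (r rb : ℂ) : KronRep where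
  V0 := ℂ
  V1 := ℂ
  f := r • LinearMap.id
  g := rb • LinearMap.id

/-- The truncation map `R(x_1,...,x_{n+1}) = (x_1,...,x_n)`. -/
def Rtrunc (n : ℕ) : (Fin (n + 1) → ℂ) →ₗ[ℂ] (Fin n → ℂ) :=
  LinearMap.funLeft ℂ ℂ Fin.castSucc

/-- The shift map `R̄(x_1,...,x_{n+1}) = (x_2,...,x_{n+1})`. -/
def Rshift (n : ℕ) : (Fin (n + 1) → ℂ) →ₗ[ℂ] (Fin n → ℂ) :=
  LinearMap.funLeft ℂ ℂ Fin.succ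

/-- The representation `ρ_n = ((ℂ^{n+1}, ℂ^n), (R, R̄))` of the Kronecker quiver. -/
def rhoRep (n : ℕ) : KronRep where
  V0 := Fin (n + 1) → ℂ
  V1 := Fin n → ℂ
  f := Rtrunc n
  g := Rshift n


lemma toeplitz_struct {n : ℕ} (A : Fin (n+1) → Fin (n+1) → ℂ)
    (hT : ∀ i j : Fin n, A i.castSucc j.castSucc = A i.succ j.succ)
    (h1 : ∀ i : Fin n, A i.castSucc (Fin.last n) = 0)
    (h2 : ∀ i : Fin n, A i.succ 0 = 0) :
    ∀ i j, A i j = if i = j then A 0 0 else 0 := by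
  have diag : ∀ i : Fin (n+1), A i i = A 0 0 := by
    intro i
    induction i using Fin.induction with
    | zero => rfl
    | succ i ih => rw [← hT]; exact ih
  have below : ∀ j : Fin (n+1), ∀ i : Fin (n+1), (j:ℕ) < (i:ℕ) → A i j = 0 := by
    intro j
    induction j using Fin.induction with
    | zero =>
      intro i hi
      obtain ⟨i0, rfl⟩ := Fin.exists_succ_eq_of_ne_zero (x := i) (by
        intro h; rw [h] at hi; simp at hi)
      exact h2 i0
    | succ j ih =>
      intro i hi
      obtain ⟨i0, rfl⟩ := Fin.exists_succ_eq_of_ne_zero (x := i) (by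
        intro h; rw [h] at hi; simp at hi)
      rw [← hT]
      refine ih i0.castSucc ?_
      simp only [Fin.coe_castSucc] at *
      simp [Fin.val_succ] at hi
      omega
  have above : ∀ j : Fin (n+1), ∀ i : Fin (n+1), (i:ℕ) < (j:ℕ) → A i j = 0 := by
    intro j
    induction j using Fin.reverseInduction with
    | last =>
      intro i hi
      obtain ⟨i0, rfl⟩ := (Fin.exists_castSucc_eq (i := i)).mpr (by
        intro h; rw [h] at hi; simp at hi)
      exact h1 i0
    | cast j ih =>
      intro i hi
      have hj : (j:ℕ) < n := j.isLt
      have hi' : (i:ℕ) < n := by simp at hi; omega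
      obtain ⟨i0, rfl⟩ := (Fin.exists_castSucc_eq (i := i)).mpr (by
        intro h; rw [h] at hi'; simp at hi')
      rw [hT]
      refine ih i0.succ ?_
      simp at hi ⊢
      omega
  intro i j
  rcases lt_trichotomy (i:ℕ) (j:ℕ) with h | h | h
  · rw [if_neg (fun he => by rw [he] at h; omega), above j i h]
  · have : i = j := Fin.ext h
    subst this
    rw [if_pos rfl, diag]
  · rw [if_neg (fun he => by rw [he] at h; omega), below j i h]

lemma endo_scalar (n : ℕ)
    (φ0 : (Fin (n + 1) → ℂ) →ₗ[ℂ] (Fin (n + 1) → ℂ))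
    (φ1 : (Fin n → ℂ) →ₗ[ℂ] (Fin n → ℂ))
    (hf : ∀ v, φ1 (Rtrunc n v) = Rtrunc n (φ0 v))
    (hg : ∀ v, φ1 (Rshift n v) = Rshift n (φ0 v)) :
    ∃ c : ℂ, φ0 = c • LinearMap.id ∧ φ1 = c • LinearMap.id := by
  set A : Fin (n+1) → Fin (n+1) → ℂ := fun i j => φ0 (Pi.single j 1) i with hA
  have trunc_single : ∀ j : Fin n,
      Rtrunc n (Pi.single (j.castSucc) (1:ℂ)) = Pi.single j 1 := by
    intro j; funext k
    simp [Rtrunc, LinearMap.funLeft_apply, Pi.single_apply, Fin.castSucc_inj]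
  have shift_single : ∀ j : Fin n,
      Rshift n (Pi.single (j.succ) (1:ℂ)) = Pi.single j 1 := by
    intro j; funext k
    simp [Rshift, LinearMap.funLeft_apply, Pi.single_apply, Fin.succ_inj]
  have key1 : ∀ (j i : Fin n), φ1 (Pi.single j 1) i = A i.castSucc j.castSucc := by
    intro j i
    have h := congrFun (hf (Pi.single j.castSucc 1)) i
    rw [trunc_single] at h
    simpa [Rtrunc, LinearMap.funLeft_apply, hA] using h
  have key2 : ∀ (j i : Fin n), φ1 (Pi.single j 1) i = A i.succ j.succ := by
    intro j i
    have h := congrFun (hg (Pi.single j.succ 1)) i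
    rw [shift_single] at h
    simpa [Rshift, LinearMap.funLeft_apply, hA] using h
  have hT : ∀ i j : Fin n, A i.castSucc j.castSucc = A i.succ j.succ := by
    intro i j; rw [← key1, key2]
  have h1 : ∀ i : Fin n, A i.castSucc (Fin.last n) = 0 := by
    intro i
    have e : Rtrunc n (Pi.single (Fin.last n) (1:ℂ)) = 0 := by
      funext k
      simp [Rtrunc, LinearMap.funLeft_apply, Pi.single_apply,
        (Fin.castSucc_lt_last k).ne]
    have h := congrFun (hf (Pi.single (Fin.last n) 1)) i
    rw [e, map_zero] at h
    simpa [Rtrunc, LinearMap.funLeft_apply, hA] using h.symm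
  have h2 : ∀ i : Fin n, A i.succ 0 = 0 := by
    intro i
    have e : Rshift n (Pi.single (0 : Fin (n+1)) (1:ℂ)) = 0 := by
      funext k
      simp [Rshift, LinearMap.funLeft_apply, Pi.single_apply, (Fin.succ_ne_zero k)]
    have h := congrFun (hg (Pi.single 0 1)) i
    rw [e, map_zero] at h
    simpa [Rshift, LinearMap.funLeft_apply, hA] using h.symm
  have struct := toeplitz_struct A hT h1 h2
  refine ⟨A 0 0, ?_, ?_⟩
  · refine Module.Basis.ext (Pi.basisFun ℂ (Fin (n+1))) fun j => ?_
    funext i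
    simp only [Pi.basisFun_apply, LinearMap.smul_apply, LinearMap.id_coe, id_eq,
      Pi.smul_apply, smul_eq_mul]
    rw [show φ0 (Pi.single j 1) i = A i j from rfl, struct i j, Pi.single_apply]
    by_cases h : i = j <;> simp [h, Fin.castSucc_inj]
  · refine Module.Basis.ext (Pi.basisFun ℂ (Fin n)) fun j => ?_
    funext i
    simp only [Pi.basisFun_apply, LinearMap.smul_apply, LinearMap.id_coe, id_eq,
      Pi.smul_apply, smul_eq_mul]
    rw [key1 j i, struct, Pi.single_apply]
    by_cases h : i = j <;> simp [h, Fin.castSucc_inj]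

/-- `ρ_n` is indecomposable and its endomorphism ring consists
only of the scalar pairs `(λ·id, λ·id)`. -/
theorem rhoRep_indecomposable (n : ℕ) :
    (rhoRep n).Indecomposable ∧
    ∀ (φ0 : (Fin (n + 1) → ℂ) →ₗ[ℂ] (Fin (n + 1) → ℂ))
      (φ1 : (Fin n → ℂ) →ₗ[ℂ] (Fin n → ℂ)),
      (∀ v, φ1 (Rtrunc n v) = Rtrunc n (φ0 v)) →
      (∀ v, φ1 (Rshift n v) = Rshift n (φ0 v)) →
      ∃ c : ℂ, φ0 = c • LinearMap.id ∧ φ1 = c • LinearMap.id := by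
  have endo := endo_scalar n
  refine ⟨⟨?_, ?_⟩, fun φ0 φ1 hf hg => endo φ0 φ1 hf hg⟩
  · rintro ⟨h0, -⟩
    have := congrFun (h0 (fun _ => 1)) 0
    exact one_ne_zero (this.trans rfl)
  · rintro N P ⟨e0, e1, hF, hG⟩
    set q0 : (N.V0 × P.V0) →ₗ[ℂ] (N.V0 × P.V0) :=
      (LinearMap.inl ℂ N.V0 P.V0).comp (LinearMap.fst ℂ N.V0 P.V0) with hq0
    set q1 : (N.V1 × P.V1) →ₗ[ℂ] (N.V1 × P.V1) :=
      (LinearMap.inl ℂ N.V1 P.V1).comp (LinearMap.fst ℂ N.V1 P.V1) with hq1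
    set π0 : (Fin (n+1) → ℂ) →ₗ[ℂ] (Fin (n+1) → ℂ) :=
      e0.symm.toLinearMap ∘ₗ q0 ∘ₗ e0.toLinearMap with hπ0
    set π1 : (Fin n → ℂ) →ₗ[ℂ] (Fin n → ℂ) :=
      e1.symm.toLinearMap ∘ₗ q1 ∘ₗ e1.toLinearMap with hπ1
    have hF' : ∀ x : Fin (n+1) → ℂ, e1 (Rtrunc n x) = (N.f.prodMap P.f) (e0 x) := hF
    have hG' : ∀ x : Fin (n+1) → ℂ, e1 (Rshift n x) = (N.g.prodMap P.g) (e0 x) := hG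
    have hrev : ∀ y : N.V0 × P.V0,
        Rtrunc n (e0.symm y) = e1.symm ((N.f.prodMap P.f) y) := by
      intro y
      have h := hF' (e0.symm y)
      erw [e0.apply_symm_apply] at h
      rw [← h]; erw [e1.symm_apply_apply]
    have hrevg : ∀ y : N.V0 × P.V0,
        Rshift n (e0.symm y) = e1.symm ((N.g.prodMap P.g) y) := by
      intro y
      have h := hG' (e0.symm y)
      erw [e0.apply_symm_apply] at h
      rw [← h]; erw [e1.symm_apply_apply]
    have hcf : ∀ v, π1 (Rtrunc n v) = Rtrunc n (π0 v) := by
      intro v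
      have step3 : q1 ((N.f.prodMap P.f) (e0 v)) = (N.f.prodMap P.f) (q0 (e0 v)) := by
        simp [hq0, hq1]; exact ⟨rfl, (map_zero _).symm⟩
      exact (congrArg (fun y => e1.symm (q1 y)) (hF' v)).trans
        ((congrArg e1.symm step3).trans (hrev (q0 (e0 v))).symm)
    have hcg : ∀ v, π1 (Rshift n v) = Rshift n (π0 v) := by
      intro v
      have step3 : q1 ((N.g.prodMap P.g) (e0 v)) = (N.g.prodMap P.g) (q0 (e0 v)) := by
        simp [hq0, hq1]; exact ⟨rfl, (map_zero _).symm⟩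
      exact (congrArg (fun y => e1.symm (q1 y)) (hG' v)).trans
        ((congrArg e1.symm step3).trans (hrevg (q0 (e0 v))).symm)
    obtain ⟨c, hc0, hc1⟩ := endo π0 π1 hcf hcg
    have hqq : ∀ x : N.V0 × P.V0, q0 (q0 x) = q0 x := fun x => by simp [hq0]
    have hidem : c * c = c := by
      have h2 : π0 (π0 (fun _ => 1)) = π0 (fun _ => 1) :=
        (congrArg (fun y => e0.symm (q0 y))
          (e0.apply_symm_apply (q0 (e0 (fun _ => 1))))).trans
          (congrArg e0.symm (hqq (e0 (fun _ => 1))))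
      rw [hc0] at h2
      have := congrFun h2 0
      simpa using this
    have hc : c = 0 ∨ c = 1 := by
      have h : c * (c - 1) = 0 := by ring_nf; linear_combination hidem
      rcases mul_eq_zero.mp h with h | h
      · exact Or.inl h
      · exact Or.inr (sub_eq_zero.mp h)
    rcases hc with hc | hc
    · left
      subst hc
      have hz0 : ∀ x : Fin (n+1) → ℂ, π0 x = 0 := by
        intro x; rw [hc0]; simp
      have hz1 : ∀ x : Fin n → ℂ, π1 x = 0 := by
        intro x; rw [hc1]; simp
      constructor
      · intro a
        have hq : q0 ((a, 0) : N.V0 × P.V0) = (a, 0) := by simp [hq0]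
        have h : π0 (e0.symm (a, 0)) = e0.symm (a, 0) :=
          (congrArg (fun y => e0.symm (q0 y))
            (e0.apply_symm_apply ((a, 0) : N.V0 × P.V0))).trans
            (congrArg e0.symm hq)
        erw [hz0] at h
        have h2 : ((a, 0) : N.V0 × P.V0) = 0 :=
          ((e0.apply_symm_apply ((a, 0) : N.V0 × P.V0)).symm.trans
            (congrArg e0 h.symm)).trans (map_zero e0)
        exact congrArg Prod.fst h2
      · intro a
        have hq : q1 ((a, 0) : N.V1 × P.V1) = (a, 0) := by simp [hq1]
        have h : π1 (e1.symm (a, 0)) = e1.symm (a, 0) :=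
          (congrArg (fun y => e1.symm (q1 y))
            (e1.apply_symm_apply ((a, 0) : N.V1 × P.V1))).trans
            (congrArg e1.symm hq)
        erw [hz1] at h
        have h2 : ((a, 0) : N.V1 × P.V1) = 0 :=
          ((e1.apply_symm_apply ((a, 0) : N.V1 × P.V1)).symm.trans
            (congrArg e1 h.symm)).trans (map_zero e1)
        exact congrArg Prod.fst h2
    · right
      subst hc
      have hz0 : ∀ x : Fin (n+1) → ℂ, π0 x = x := by
        intro x; rw [hc0]; simp
      have hz1 : ∀ x : Fin n → ℂ, π1 x = x := by
        intro x; rw [hc1]; simp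
      constructor
      · intro b
        have hq : q0 ((0, b) : N.V0 × P.V0) = 0 := by simp [hq0]
        have h : π0 (e0.symm (0, b)) = 0 :=
          (congrArg (fun y => e0.symm (q0 y))
            (e0.apply_symm_apply ((0, b) : N.V0 × P.V0))).trans
            ((congrArg e0.symm hq).trans (map_zero e0.symm))
        erw [hz0] at h
        have h2 : ((0, b) : N.V0 × P.V0) = 0 :=
          ((e0.apply_symm_apply ((0, b) : N.V0 × P.V0)).symm.trans
            (congrArg e0 h)).trans (map_zero e0)
        exact congrArg Prod.snd h2
      · intro b
        have hq : q1 ((0, b) : N.V1 × P.V1) = 0 := by simp [hq1]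
        have h : π1 (e1.symm (0, b)) = 0 :=
          (congrArg (fun y => e1.symm (q1 y))
            (e1.apply_symm_apply ((0, b) : N.V1 × P.V1))).trans
            ((congrArg e1.symm hq).trans (map_zero e1.symm))
        erw [hz1] at h
        have h2 : ((0, b) : N.V1 × P.V1) = 0 :=
          ((e1.apply_symm_apply ((0, b) : N.V1 × P.V1)).symm.trans
            (congrArg e1 h)).trans (map_zero e1)
        exact congrArg Prod.snd h2
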